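/- Define u : [0,2] × ℝ → ℝ by u(t,x) = 1 − t/2 for x < −(1−t/2)², u(t,x) = −x/(1−t/2) for −(1−t/2)² ≤ x ≤ (1−t/2)² and t < 2, u(t,x) = −1 + t/2 for x > (1−t/2)², and u(2,x) = 0 for all x. Then u is uniformly bounded on [0,2] × ℝ and uniformly Hölder continuous with exponent 1/2: there exists a constant C > 0 such that |u(t,x) − u(s,y)| ≤ C·(|t−s| + |x−y|)^{1/2} for all t, s ∈ [0,2] and x, y ∈ ℝ. -/

import Mathlib

/-- The peakon solution of the Hunter–Saxton equation from Example 1: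
`u(t,x) = 1 - t/2` for `x < -(1-t/2)²`, `u(t,x) = -x/(1-t/2)` for
`-(1-t/2)² ≤ x ≤ (1-t/2)²`, and `u(t,x) = -1 + t/2` for `x > (1-t/2)²`.
(At `t = 2` this formula gives `u(2,x) = 0` for all `x`.) -/
noncomputable def peakon (t x : ℝ) : ℝ :=
  if x < -(1 - t/2)^2 then 1 - t/2
  else if x ≤ (1 - t/2)^2 then -x / (1 - t/2)
  else -1 + t/2

/-- The profile as a function of `a = 1 - t/2`. -/
noncomputable def pk (a x : ℝ) : ℝ :=
  if x < -a^2 then a else if x ≤ a^2 then -x/a else -a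

lemma peakon_eq_pk (t x : ℝ) : peakon t x = pk (1 - t/2) x := by
  unfold peakon pk
  split_ifs <;> ring

lemma pk_zero (x : ℝ) : pk 0 x = 0 := by
  unfold pk; split_ifs <;> simp_all

lemma abs_pk_le (a x : ℝ) (ha : 0 ≤ a) : |pk a x| ≤ a := by
  unfold pk
  split_ifs with h1 h2
  · rw [abs_of_nonneg ha]
  · rcases eq_or_lt_of_le ha with rfl | ha'
    · simp
    · rw [abs_div, abs_of_pos ha', div_le_iff₀ ha', abs_le]
      push_neg at h1
      constructor <;> nlinarith
  · rw [abs_neg, abs_of_nonneg ha]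

lemma pk_lip_a_aux (a b x : ℝ) (ha : 0 ≤ a) (hb : 0 ≤ b) (hab : a ≤ b) :
    |pk a x - pk b x| ≤ |a - b| := by
  rw [abs_sub_comm a b, abs_of_nonneg (by linarith : (0:ℝ) ≤ b - a),
    abs_sub_le_iff]
  unfold pk
  split_ifs with h1 h2 h3 h4 h3 h4 <;> try push_neg at *
  · constructor <;> linarith
  · -- a-branch: left, b-branch: middle
    rcases eq_or_lt_of_le hb with rfl | hb'
    · exfalso; nlinarith [sq_nonneg a]
    · have hxb : -x / b * b = -x := div_mul_cancel₀ (-x) (ne_of_gt hb')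
      constructor <;> nlinarith [mul_pos hb' hb', sq_nonneg (a - b)]
  · exfalso; nlinarith [sq_nonneg a, sq_nonneg b]
  · -- a middle, b left: contradiction since a² ≤ b²
    exfalso; nlinarith
  · -- both middle
    rcases eq_or_lt_of_le ha with rfl | ha'
    · have hx : x = 0 := le_antisymm (by simpa using h4) (by simpa using h1)
      simp [hx, hb]
    · have hb' : 0 < b := lt_of_lt_of_le ha' hab
      have hxa : -x / a * a = -x := div_mul_cancel₀ (-x) (ne_of_gt ha')
      have hxb : -x / b * b = -x := div_mul_cancel₀ (-x) (ne_of_gt hb')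
      constructor <;>
        nlinarith [mul_pos ha' hb', sq_nonneg (a - b),
          mul_le_mul_of_nonneg_left hab ha]
  · -- a middle, b right: contradiction
    exfalso; nlinarith
  · exfalso; nlinarith [sq_nonneg a, sq_nonneg b]
  · -- a right, b middle
    rcases eq_or_lt_of_le hb with rfl | hb'
    · exfalso; nlinarith [sq_nonneg a]
    · have hxb : -x / b * b = -x := div_mul_cancel₀ (-x) (ne_of_gt hb')
      constructor <;> nlinarith [mul_pos hb' hb', sq_nonneg (a - b)]
  · constructor <;> linarith

/-- `pk` is `1`-Lipschitz in `a` on `a ≥ 0`. -/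
lemma pk_lip_a (a b x : ℝ) (ha : 0 ≤ a) (hb : 0 ≤ b) :
    |pk a x - pk b x| ≤ |a - b| := by
  rcases le_total a b with hab | hab
  · exact pk_lip_a_aux a b x ha hb hab
  · rw [abs_sub_comm (pk a x), abs_sub_comm a b]
    exact pk_lip_a_aux b a x hb ha hab

lemma pk_lip_x_aux (a x y : ℝ) (ha : 0 < a) (hxy : x ≤ y) :
    |pk a x - pk a y| ≤ |x - y| / a := by
  rw [abs_sub_comm x y, abs_of_nonneg (by linarith : (0:ℝ) ≤ y - x),
    abs_sub_le_iff]
  unfold pk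
  have hxa : -x / a * a = -x := div_mul_cancel₀ (-x) (ne_of_gt ha)
  have hya : -y / a * a = -y := div_mul_cancel₀ (-y) (ne_of_gt ha)
  split_ifs with h1 h2 h3 h4 h3 h4 <;> (try push_neg at *) <;>
    constructor <;> rw [le_div_iff₀ ha] <;>
    nlinarith [sq_nonneg a, mul_pos ha ha]

/-- `pk a` is `1/a`-Lipschitz in `x` for `a > 0`. -/
lemma pk_lip_x (a x y : ℝ) (ha : 0 < a) :
    |pk a x - pk a y| ≤ |x - y| / a := by
  rcases le_total x y with hxy | hxy
  · exact pk_lip_x_aux a x y ha hxy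
  · rw [abs_sub_comm (pk a x), abs_sub_comm x y]
    exact pk_lip_x_aux a y x ha hxy

/-- `pk a` is Hölder-1/2 in `x`, uniformly in `a ∈ [0,1]`. -/
lemma pk_holder_x (a x y : ℝ) (ha : 0 ≤ a) :
    |pk a x - pk a y| ≤ Real.sqrt (2 * |x - y|) := by
  rcases eq_or_lt_of_le ha with rfl | ha'
  · simp [pk_zero, Real.sqrt_nonneg]
  · have h1 := pk_lip_x a x y ha'
    have h2 : |pk a x - pk a y| ≤ 2 * a := by
      calc |pk a x - pk a y| ≤ |pk a x| + |pk a y| := abs_sub _ _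
        _ ≤ 2 * a := by
          have := abs_pk_le a x ha; have := abs_pk_le a y ha; linarith
    have hsq : |pk a x - pk a y| ^ 2 ≤ 2 * |x - y| := by
      calc |pk a x - pk a y| ^ 2 = |pk a x - pk a y| * |pk a x - pk a y| := by ring
        _ ≤ (|x - y| / a) * (2 * a) :=
          mul_le_mul h1 h2 (abs_nonneg _) (by positivity)
        _ = 2 * |x - y| := by field_simp
    calc |pk a x - pk a y| = Real.sqrt (|pk a x - pk a y| ^ 2) :=
          (Real.sqrt_sq (abs_nonneg _)).symm
      _ ≤ Real.sqrt (2 * |x - y|) := Real.sqrt_le_sqrt hsq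

theorem peakon_bounded_and_holder :
    (∃ B : ℝ, ∀ t ∈ Set.Icc (0 : ℝ) 2, ∀ x : ℝ, |peakon t x| ≤ B) ∧
    (∃ C : ℝ, 0 < C ∧
      ∀ t ∈ Set.Icc (0 : ℝ) 2, ∀ s ∈ Set.Icc (0 : ℝ) 2, ∀ x y : ℝ,
        |peakon t x - peakon s y| ≤ C * Real.sqrt (|t - s| + |x - y|)) := by
  constructor
  · refine ⟨1, fun t ht x => ?_⟩
    rw [peakon_eq_pk]
    have h := abs_pk_le (1 - t/2) x (by linarith [ht.2])
    linarith [ht.1]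
  · refine ⟨3, by norm_num, fun t ht s hs x y => ?_⟩
    rw [peakon_eq_pk, peakon_eq_pk]
    set a := 1 - t/2 with ha_def
    set b := 1 - s/2 with hb_def
    have ha : 0 ≤ a := by simp [ha_def]; linarith [ht.2]
    have hb : 0 ≤ b := by simp [hb_def]; linarith [hs.2]
    set S := |t - s| + |x - y| with hS
    have hS0 : 0 ≤ S := by positivity
    have hts : |a - b| = |t - s| / 2 := by
      rw [ha_def, hb_def, show (1 - t/2) - (1 - s/2) = -(t - s)/2 by ring,
        abs_div, abs_neg]
      norm_num
    have step1 : |pk a x - pk b y| ≤ Real.sqrt (2 * |x - y|) + |t - s| / 2 := by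
      calc |pk a x - pk b y| ≤ |pk a x - pk a y| + |pk a y - pk b y| :=
            abs_sub_le _ _ _
        _ ≤ Real.sqrt (2 * |x - y|) + |a - b| :=
            add_le_add (pk_holder_x a x y ha) (pk_lip_a a b y ha hb)
        _ = _ := by rw [hts]
    have hb1 : Real.sqrt (2 * |x - y|) ≤ 2 * Real.sqrt S := by
      have : Real.sqrt (2 * |x - y|) ≤ Real.sqrt (4 * S) := by
        apply Real.sqrt_le_sqrt
        have := abs_nonneg (t - s); have := abs_nonneg (x - y)
        simp only [hS]; linarith
      calc Real.sqrt (2 * |x - y|) ≤ Real.sqrt (4 * S) := this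
        _ = 2 * Real.sqrt S := by
          rw [show (4:ℝ) * S = 2^2 * S by ring, Real.sqrt_mul (by positivity),
            Real.sqrt_sq (by norm_num)]
    have hb2 : |t - s| / 2 ≤ Real.sqrt S := by
      have hts4 : |t - s| ≤ 4 := by
        rw [abs_le]; constructor <;> linarith [ht.1, ht.2, hs.1, hs.2]
      have : (|t - s| / 2) ^ 2 ≤ S := by
        have h0 := abs_nonneg (t - s)
        have h1 := abs_nonneg (x - y)
        simp only [hS]; nlinarith
      calc |t - s| / 2 = Real.sqrt ((|t - s| / 2) ^ 2) :=
            (Real.sqrt_sq (by positivity)).symm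
        _ ≤ Real.sqrt S := Real.sqrt_le_sqrt this
    calc |pk a x - pk b y| ≤ Real.sqrt (2 * |x - y|) + |t - s| / 2 := step1
      _ ≤ 2 * Real.sqrt S + Real.sqrt S := add_le_add hb1 hb2
      _ = 3 * Real.sqrt S := by ring
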